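/- Let P be a reduced Poisson algebra over a field 𝔽 (P has no nonzero nilpotent elements). Then P is strongly solvable if and only if P is abelian, i.e. {P,P} = 0. -/
import Mathlib


/-- A Poisson bracket on a commutative associative unital `F`-algebra `P`:
an `F`-bilinear, alternating bracket satisfying the Jacobi identity and the
Leibniz rule `{a·b, c} = a·{b,c} + b·{a,c}`. -/
structure PoissonBracket (F P : Type*) [Field F] [CommRing P] [Algebra F P] where
  bracket : P → P → P
  add_left : ∀ a b c : P, bracket (a + b) c = bracket a c + bracket b c
  smul_left : ∀ (r : F) (a b : P), bracket (r • a) b = r • bracket a b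
  add_right : ∀ a b c : P, bracket a (b + c) = bracket a b + bracket a c
  smul_right : ∀ (r : F) (a b : P), bracket a (r • b) = r • bracket a b
  alt : ∀ a : P, bracket a a = 0
  jacobi : ∀ a b c : P,
    bracket (bracket a b) c + bracket (bracket b c) a + bracket (bracket c a) b = 0
  leibniz : ∀ a b c : P, bracket (a * b) c = a * bracket b c + b * bracket a c

namespace PoissonBracket

variable {F P : Type*} [Field F] [CommRing P] [Algebra F P]

/-- `{A, B}`: the `F`-span of all brackets of elements of `A` with elements of `B`. -/
def lieSpan (pb : PoissonBracket F P) (A B : Submodule F P) : Submodule F P :=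
  Submodule.span F {z : P | ∃ a ∈ A, ∃ b ∈ B, z = pb.bracket a b}

/-- Upper derived series: `δ̃₀(P) = P`, `δ̃ₙ₊₁(P) = {δ̃ₙ(P), δ̃ₙ(P)}·P`. -/
def udelta (pb : PoissonBracket F P) : ℕ → Submodule F P
  | 0 => ⊤
  | n + 1 => pb.lieSpan (pb.udelta n) (pb.udelta n) * ⊤

/-- Derived series of a Lie ideal `I`: `δ₀(I) = I`, `δₙ₊₁(I) = {δₙ(I), δₙ(I)}`. -/
def dseries (pb : PoissonBracket F P) (I : Submodule F P) : ℕ → Submodule F P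
  | 0 => I
  | n + 1 => pb.lieSpan (pb.dseries I n) (pb.dseries I n)

/-- Lower central series of a Lie ideal `I`, indexed so that `lcs I 1 = γ₁(I) = I`
and `lcs I (n+1) = γₙ₊₁(I) = {γₙ(I), I}` for `n ≥ 1` (index `0` is a dummy equal to `I`). -/
def lcs (pb : PoissonBracket F P) (I : Submodule F P) : ℕ → Submodule F P
  | 0 => I
  | 1 => I
  | n + 2 => pb.lieSpan (pb.lcs I (n + 1)) I

/-- Upper Lie power series: `P⁽¹⁾ = P`, `P⁽ⁿ⁾ = {P⁽ⁿ⁻¹⁾, P}·P` for `n > 1`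
(index `0` is a dummy equal to `P`). -/
def ulps (pb : PoissonBracket F P) : ℕ → Submodule F P
  | 0 => ⊤
  | 1 => ⊤
  | n + 2 => pb.lieSpan (pb.ulps (n + 1)) ⊤ * ⊤

/-- A Poisson ideal: an ideal for the associative product which is also a Lie ideal. -/
def IsPoissonIdeal (pb : PoissonBracket F P) (I : Submodule F P) : Prop :=
  (∀ x ∈ I, ∀ p : P, p * x ∈ I) ∧ (∀ x ∈ I, ∀ p : P, pb.bracket x p ∈ I)

/-- The Poisson ideal generated by a set `S`: the smallest Poisson ideal containing `S`. -/
def poissonSpan (pb : PoissonBracket F P) (S : Set P) : Submodule F P :=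
  sInf {I : Submodule F P | pb.IsPoissonIdeal I ∧ S ⊆ I}

end PoissonBracket

open PoissonBracket

namespace PoissonBracket

variable {F P : Type*} [Field F] [CommRing P] [Algebra F P] (pb : PoissonBracket F P)

lemma zero_left (b : P) : pb.bracket 0 b = 0 := by
  have h := pb.smul_left (0 : F) 0 b
  simpa using h

lemma skew (a b : P) : pb.bracket a b + pb.bracket b a = 0 := by
  have h := pb.alt (a + b)
  rw [pb.add_left, pb.add_right, pb.add_right, pb.alt, pb.alt] at h
  linear_combination h

lemma leibniz_right (a b c : P) :
    pb.bracket a (b * c) = b * pb.bracket a c + c * pb.bracket a b := by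
  have h := pb.leibniz b c a
  linear_combination pb.skew a (b * c) - h - b * pb.skew c a - c * pb.skew b a

lemma mem_lieSpan {A B : Submodule F P} {a b : P} (ha : a ∈ A) (hb : b ∈ B) :
    pb.bracket a b ∈ pb.lieSpan A B :=
  Submodule.subset_span ⟨a, ha, b, hb, rfl⟩

lemma lieSpan_eq_bot {A B : Submodule F P}
    (h : ∀ a ∈ A, ∀ b ∈ B, pb.bracket a b = 0) : pb.lieSpan A B = ⊥ := by
  rw [lieSpan, Submodule.span_eq_bot]
  rintro z ⟨a, ha, b, hb, rfl⟩
  exact h a ha b hb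

lemma mul_mem_udelta_succ {n : ℕ} {x y : P} (hx : x ∈ pb.udelta n)
    (hy : y ∈ pb.udelta n) (p : P) : pb.bracket x y * p ∈ pb.udelta (n + 1) :=
  Submodule.mul_mem_mul (pb.mem_lieSpan hx hy) Submodule.mem_top

lemma udelta_descent [IsReduced P] (n : ℕ) (h : pb.udelta (n + 2) = ⊥) :
    pb.udelta (n + 1) = ⊥ := by
  -- brackets of elements of `udelta (n+1)` vanish
  have hbr : ∀ c ∈ pb.udelta (n + 1), ∀ d ∈ pb.udelta (n + 1), pb.bracket c d = 0 := by
    intro c hc d hd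
    have hm : pb.bracket c d * 1 ∈ pb.udelta (n + 2) :=
      pb.mul_mem_udelta_succ hc hd 1
    rw [mul_one, h, Submodule.mem_bot] at hm
    exact hm
  -- every generator bracket of `udelta n` is nilpotent, hence zero
  have hz : ∀ x ∈ pb.udelta n, ∀ y ∈ pb.udelta n, pb.bracket x y = 0 := by
    intro x hx y hy
    set u := pb.bracket x y with hu
    have humem : u ∈ pb.udelta (n + 1) := by
      have := pb.mul_mem_udelta_succ hx hy 1
      rwa [mul_one] at this
    have h1 : ∀ p : P, u * pb.bracket p u = 0 := by
      intro p
      have h0 : pb.bracket (u * p) u = 0 :=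
        hbr _ (pb.mul_mem_udelta_succ hx hy p) _ humem
      have hl := pb.leibniz u p u
      have ha := pb.alt u
      linear_combination h0 - hl - p * ha
    have h0 : pb.bracket (u * x) (u * y) = 0 :=
      hbr _ (pb.mul_mem_udelta_succ hx hy x) _ (pb.mul_mem_udelta_succ hx hy y)
    have e1 := pb.leibniz u x (u * y)
    have e2 := pb.leibniz_right x u y
    have e3 := pb.leibniz_right u u y
    have ha := pb.alt u
    have h1x := h1 x
    have h1y : u * pb.bracket u y = 0 := by
      have hs := pb.skew u y
      have := h1 y
      linear_combination u * hs - this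
    have hcube : u ^ 3 = 0 := by
      linear_combination h0 - e1 - u * e2 - x * e3 - y * h1x - x * h1y - x * y * ha + u ^ 2 * hu
    have : IsNilpotent u := ⟨3, hcube⟩
    exact this.eq_zero
  have hspan : pb.lieSpan (pb.udelta n) (pb.udelta n) = ⊥ := pb.lieSpan_eq_bot hz
  show pb.lieSpan (pb.udelta n) (pb.udelta n) * ⊤ = ⊥
  rw [hspan, Submodule.bot_mul]

lemma udelta_one_eq_bot [IsReduced P] (n : ℕ) (h : pb.udelta (n + 1) = ⊥) :
    pb.udelta 1 = ⊥ := by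
  induction n with
  | zero => exact h
  | succ k ih => exact ih (pb.udelta_descent k h)

end PoissonBracket

/-- A reduced Poisson algebra is strongly solvable iff it is abelian. -/
theorem reduced_stronglySolvable_iff_abelian
    {F P : Type*} [Field F] [CommRing P] [Algebra F P] [IsReduced P]
    (pb : PoissonBracket F P) :
    (∃ n : ℕ, pb.udelta n = ⊥) ↔ ∀ x y : P, pb.bracket x y = 0 := by
  constructor
  · rintro ⟨n, hn⟩ x y
    cases n with
    | zero =>
      have hx : x = 0 := by
        have : x ∈ pb.udelta 0 := Submodule.mem_top
        rw [hn, Submodule.mem_bot] at this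
        exact this
      rw [hx, pb.zero_left]
    | succ m =>
      have h1 := pb.udelta_one_eq_bot m hn
      have hm : pb.bracket x y * 1 ∈ pb.udelta 1 :=
        pb.mul_mem_udelta_succ Submodule.mem_top Submodule.mem_top 1
      rwa [mul_one, h1, Submodule.mem_bot] at hm
  · intro h
    refine ⟨1, ?_⟩
    have hspan : pb.lieSpan (⊤ : Submodule F P) ⊤ = ⊥ :=
      pb.lieSpan_eq_bot fun a _ b _ => h a b
    show pb.lieSpan (pb.udelta 0) (pb.udelta 0) * ⊤ = ⊥
    rw [show pb.udelta 0 = ⊤ from rfl, hspan, Submodule.bot_mul]
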